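/- If I is a right ideal of R whose extension I^e = I·R^e equals R^e, then Kdim(R/I) < m, i.e., I belongs to the m-Gabriel filter g. -/
import Mathlib


set_option linter.unusedVariables false

/-- `devLE k A` : the deviation (in the Gabriel–Rentschler sense) of the
poset `A` is `≤ k` (for `k : ℕ`).  `devLE 0 A` says every descending chain
eventually stabilizes (DCC), and `devLE (k+1) A` says that in any descending
chain all but finitely many of the factor intervals have deviation `≤ k`. -/
def devLE : ℕ → (A : Type*) → [inst : Preorder A] → Prop
  | 0, A, _ => ∀ f : ℕ → A, Antitone f → ∃ N, ∀ i, N ≤ i → f (i + 1) = f i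
  | (k+1), A, _ => ∀ f : ℕ → A, Antitone f →
      ∃ N, ∀ i, N ≤ i → devLE k (Set.Icc (f (i + 1)) (f i))

/-- The Gabriel–Rentschler Krull dimension of the right `R`-module `M`
(a module over `Rᵐᵒᵖ`) is `≤ k` : the deviation of its submodule lattice is `≤ k`. -/
def kdimLE (R M : Type*) [Ring R] [AddCommGroup M] [Module Rᵐᵒᵖ M] (k : ℕ) : Prop :=
  devLE k (Submodule Rᵐᵒᵖ M)

/-- `c` is a regular element of `R` (neither a left nor a right zero divisor). -/
def regElem (R : Type*) [Ring R] (c : R) : Prop :=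
  (∀ x : R, c * x = 0 → x = 0) ∧ (∀ x : R, x * c = 0 → x = 0)

/-- `C_m = {c ∈ R | Kdim(R/cR) < m}` (for `0 < m`, `Kdim < m` is `Kdim ≤ m-1`). -/
def rCm (R : Type*) [Ring R] (m : ℕ) : Set R :=
  {c | kdimLE R (R ⧸ Submodule.span Rᵐᵒᵖ ({c} : Set R)) (m - 1)}

/-- The m-Gabriel filter `g = {right ideals I | Kdim(R/I) < m}`. -/
def gFilt (R : Type*) [Ring R] (m : ℕ) : Set (Submodule Rᵐᵒᵖ R) :=
  {I | kdimLE R (R ⧸ I) (m - 1)}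

/-- A right ideal `P` is a (two-sided) prime ideal of `R`. -/
def isTwoSidedPrime (R : Type*) [Ring R] (P : Submodule Rᵐᵒᵖ R) : Prop :=
  (∀ a ∈ P, ∀ r : R, r * a ∈ P) ∧ P ≠ ⊤ ∧
    ∀ a b : R, (∀ r : R, a * r * b ∈ P) → a ∈ P ∨ b ∈ P

/-- `c ∈ C(P)` : `c` is regular modulo `P`. -/
def regModP (R : Type*) [Ring R] (P : Submodule Rᵐᵒᵖ R) (c : R) : Prop :=
  ∀ x : R, (c * x ∈ P → x ∈ P) ∧ (x * c ∈ P → x ∈ P)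

/-- `X_m` : the set of (two-sided) prime ideals `P` with `Kdim(R/P) = m`. -/
def xSet (R : Type*) [Ring R] (m : ℕ) : Set (Submodule Rᵐᵒᵖ R) :=
  {P | isTwoSidedPrime R P ∧ kdimLE R (R ⧸ P) m ∧ ¬ kdimLE R (R ⧸ P) (m - 1)}

/-- `V_m = ⋂_{P ∈ X_m} C(P)`. -/
def vSet (R : Type*) [Ring R] (m : ℕ) : Set R :=
  {v | ∀ P ∈ xSet R m, regModP R P v}

/-- Left multiplication by `a` as a right-module (`Rᵐᵒᵖ`-module) endomorphism of `R`. -/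
def lmulHom (R : Type*) [Ring R] (a : R) : R →ₗ[Rᵐᵒᵖ] R where
  toFun x := a * x
  map_add' x y := mul_add a x y
  map_smul' r x := by
    simp [MulOpposite.smul_eq_mul_unop, mul_assoc]

/-- `Q` is a classical right quotient ring of `R` via `f : R →+* Q` :
`f` is injective, regular elements of `R` become units in `Q`, and every
element of `Q` is a right fraction `f a * (f s)⁻¹`. -/
def isRightQuotientRing (R Q : Type*) [Ring R] [Ring Q] (f : R →+* Q) : Prop :=
  Function.Injective f ∧ (∀ s : R, regElem R s → IsUnit (f s)) ∧
    ∀ q : Q, ∃ a s : R, regElem R s ∧ q * f s = f a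

/-- `R^e = {q ∈ Q | qJ ⊆ R for some J in the m-Gabriel filter}`, as a subset of `Q`. -/
def reSet (R Q : Type*) [Ring R] [Ring Q] (f : R →+* Q) (m : ℕ) : Set Q :=
  {q | ∃ J ∈ gFilt R m, ∀ j ∈ J, ∃ r : R, q * f j = f r}

/-- The extension `A·R^e` of a set `A ⊆ R` : the additive subgroup of `Q`
generated by products `f a * q` with `a ∈ A`, `q ∈ R^e` (a right ideal of `R^e`). -/
def extSet (R Q : Type*) [Ring R] [Ring Q] (f : R →+* Q) (m : ℕ) (A : Set R) : Set Q :=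
  (AddSubgroup.closure {x : Q | ∃ a ∈ A, ∃ q ∈ reSet R Q f m, x = f a * q} : Set Q)

/-- The right `R`-module structure on `Q` induced by `f : R →+* Q`. -/
theorem devLE_of_map : ∀ (k : ℕ) {A B : Type*} [Preorder A] [Preorder B] (e : B → A),
    Monotone e → (∀ x y : B, x ≤ y → e x = e y → x = y) → devLE k A → devLE k B
  | 0, A, B, _, _, e, hmono, hinj, hA => fun f hf => by
      obtain ⟨N, hN⟩ := hA (e ∘ f) (hmono.comp_antitone hf)
      exact ⟨N, fun i hi => hinj _ _ (hf (Nat.le_succ i)) (hN i hi)⟩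
  | (k+1), A, B, _, _, e, hmono, hinj, hA => fun f hf => by
      obtain ⟨N, hN⟩ := hA (e ∘ f) (hmono.comp_antitone hf)
      refine ⟨N, fun i hi => ?_⟩
      refine devLE_of_map k (fun x => (⟨e x.1, hmono x.2.1, hmono x.2.2⟩ :
        Set.Icc ((e ∘ f) (i+1)) ((e ∘ f) i))) (fun x y h => hmono h)
        (fun x y h he => Subtype.ext (hinj _ _ h (congrArg Subtype.val he))) (hN i hi)

theorem devLE_prod : ∀ (k : ℕ) {A B : Type*} [Preorder A] [Preorder B],
    devLE k A → devLE k B → devLE k (A × B)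
  | 0, A, B, _, _, hA, hB => fun f hf => by
      obtain ⟨N1, h1⟩ := hA (fun i => (f i).1) (fun i j h => (hf h).1)
      obtain ⟨N2, h2⟩ := hB (fun i => (f i).2) (fun i j h => (hf h).2)
      exact ⟨max N1 N2, fun i hi => Prod.ext (h1 i (le_trans (le_max_left _ _) hi))
        (h2 i (le_trans (le_max_right _ _) hi))⟩
  | (k+1), A, B, _, _, hA, hB => fun f hf => by
      obtain ⟨N1, h1⟩ := hA (fun i => (f i).1) (fun i j h => (hf h).1)
      obtain ⟨N2, h2⟩ := hB (fun i => (f i).2) (fun i j h => (hf h).2)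
      refine ⟨max N1 N2, fun i hi => ?_⟩
      have hP := devLE_prod k (h1 i (le_trans (le_max_left _ _) hi))
        (h2 i (le_trans (le_max_right _ _) hi))
      refine devLE_of_map k (fun x => ((⟨x.1.1, x.2.1.1, x.2.2.1⟩, ⟨x.1.2, x.2.1.2, x.2.2.2⟩) :
          Set.Icc (f (i+1)).1 (f i).1 × Set.Icc (f (i+1)).2 (f i).2))
        (fun x y h => Prod.mk_le_mk.mpr ⟨h.1, h.2⟩) ?_ hP
      intro x y h he
      exact Subtype.ext (Prod.ext (congrArg (fun z => z.1.val) he) (congrArg (fun z => z.2.val) he))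

theorem devLE_of_subsingleton : ∀ (k : ℕ) (A : Type*) [Preorder A],
    Subsingleton A → devLE k A
  | 0, A, _, h => fun f hf => ⟨0, fun i _ => Subsingleton.elim _ _⟩
  | (k+1), A, _, h => fun f hf => ⟨0, fun i _ =>
      devLE_of_subsingleton k _ ⟨fun x y => Subtype.ext (Subsingleton.elim _ _)⟩⟩

theorem devLE_quot_of_le {R : Type*} [Ring R] {J I : Submodule Rᵐᵒᵖ R} (h : J ≤ I) (k : ℕ)
    (hJ : devLE k (Submodule Rᵐᵒᵖ (R ⧸ J))) : devLE k (Submodule Rᵐᵒᵖ (R ⧸ I)) := by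
  refine devLE_of_map k (fun K => Submodule.map J.mkQ (Submodule.comap I.mkQ K))
    (fun K L hKL => Submodule.map_mono (Submodule.comap_mono hKL)) ?_ hJ
  intro K L _ he
  have h1 : ∀ K : Submodule Rᵐᵒᵖ (R ⧸ I),
      Submodule.comap J.mkQ (Submodule.map J.mkQ (Submodule.comap I.mkQ K))
        = Submodule.comap I.mkQ K := by
    intro K
    rw [Submodule.comap_map_eq, Submodule.ker_mkQ, sup_eq_left]
    refine le_trans h fun x hx => ?_
    show I.mkQ x ∈ K
    rw [Submodule.mkQ_apply, (Submodule.Quotient.mk_eq_zero I).mpr hx]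
    exact K.zero_mem
  have h2 : Submodule.comap I.mkQ K = Submodule.comap I.mkQ L := by
    rw [← h1 K, ← h1 L]; exact congrArg _ he
  have h3 := congrArg (Submodule.map I.mkQ) h2
  rwa [Submodule.map_comap_eq_of_surjective (Submodule.mkQ_surjective I),
    Submodule.map_comap_eq_of_surjective (Submodule.mkQ_surjective I)] at h3

theorem gFilt_inf {R : Type*} [Ring R] {m : ℕ} {J J' : Submodule Rᵐᵒᵖ R}
    (hJ : J ∈ gFilt R m) (hJ' : J' ∈ gFilt R m) : J ⊓ J' ∈ gFilt R m := by
  set k := m - 1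
  set π := (J ⊓ J').mkQ with hπdef
  refine devLE_of_map k
    (fun K => ((Submodule.map J'.mkQ (Submodule.comap π K ⊓ J),
               Submodule.map J.mkQ (Submodule.comap π K ⊔ J)) :
        Submodule Rᵐᵒᵖ (R ⧸ J') × Submodule Rᵐᵒᵖ (R ⧸ J)))
    (fun K L h => Prod.mk_le_mk.mpr
      ⟨Submodule.map_mono (inf_le_inf_right J (Submodule.comap_mono h)),
       Submodule.map_mono (sup_le_sup_right (Submodule.comap_mono h) J)⟩) ?_
    (devLE_prod k hJ' hJ)
  intro K L hKL he
  set X := Submodule.comap π K with hX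
  set Y := Submodule.comap π L with hY
  have hXY : X ≤ Y := Submodule.comap_mono hKL
  have hker : J ⊓ J' ≤ X := fun x hx => by
    show π x ∈ K
    rw [hπdef, Submodule.mkQ_apply, (Submodule.Quotient.mk_eq_zero _).mpr hx]
    exact K.zero_mem
  have he1 : (X ⊓ J) ⊔ J' = (Y ⊓ J) ⊔ J' := by
    have := congrArg (Submodule.comap J'.mkQ) (congrArg Prod.fst he)
    simpa [Submodule.comap_map_eq, Submodule.ker_mkQ] using this
  have he2 : X ⊔ J = Y ⊔ J := by
    have := congrArg (Submodule.comap J.mkQ) (congrArg Prod.snd he)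
    simp only [Submodule.comap_map_eq, Submodule.ker_mkQ, sup_assoc, sup_idem] at this
    exact this
  have hYX : Y = X := by
    have hYle : Y ≤ X ⊔ J := he2 ▸ le_sup_left
    have step1 : Y = X ⊔ (J ⊓ Y) := by
      have := sup_inf_assoc_of_le (α := Submodule Rᵐᵒᵖ R) J hXY
      rw [← this, inf_eq_right.mpr hYle]
    have hJYle : J ⊓ Y ≤ (X ⊓ J) ⊔ J' := by
      calc J ⊓ Y ≤ (Y ⊓ J) ⊔ J' := le_sup_of_le_left (inf_comm J Y ▸ le_refl _)
      _ = (X ⊓ J) ⊔ J' := he1.symm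
    have step2 : J ⊓ Y = (X ⊓ J) ⊔ (J' ⊓ (J ⊓ Y)) := by
      have hle : X ⊓ J ≤ J ⊓ Y := le_inf inf_le_right (le_trans inf_le_left hXY)
      have := sup_inf_assoc_of_le (α := Submodule Rᵐᵒᵖ R) J' hle
      rw [← this, inf_eq_right.mpr hJYle]
    have step3 : J ⊓ Y ≤ X := by
      rw [step2]
      refine sup_le inf_le_left (le_trans ?_ hker)
      exact le_inf (le_trans inf_le_right inf_le_left) inf_le_left
    exact le_antisymm (step1.le.trans (sup_le le_rfl step3)) hXY
  have := congrArg (Submodule.map π) hYX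
  rwa [hX, hY, Submodule.map_comap_eq_of_surjective (Submodule.mkQ_surjective _),
    Submodule.map_comap_eq_of_surjective (Submodule.mkQ_surjective _), eq_comm] at this

def qMod (R Q : Type*) [Ring R] [Ring Q] (f : R →+* Q) : Module Rᵐᵒᵖ Q :=
  Module.compHom Q (RingHom.op f)

theorem stmt14 (R : Type) [Ring R] [Nontrivial R] [IsNoetherian Rᵐᵒᵖ R]
    (hprime : ∀ a b : R, (∀ r : R, a * r * b = 0) → a = 0 ∨ b = 0)
    (n m : ℕ) (hm : 0 < m) (hmn : m < n)
    (hdim : kdimLE R R n ∧ ¬ kdimLE R R (n - 1))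
    (Q : Type) [Ring Q] (f : R →+* Q) (hQ : isRightQuotientRing R Q f) :
    ∀ I : Submodule Rᵐᵒᵖ R, extSet R Q f m ↑I = reSet R Q f m → I ∈ gFilt R m := by
  intro I hI
  have hfinj : Function.Injective f := hQ.1
  have htop : (⊤ : Submodule Rᵐᵒᵖ R) ∈ gFilt R m := by
    refine devLE_of_subsingleton _ _ ?_
    have hs : Subsingleton (R ⧸ (⊤ : Submodule Rᵐᵒᵖ R)) :=
      Submodule.Quotient.subsingleton_iff.mpr rfl
    exact ⟨fun p q => by ext x; simp [Subsingleton.elim x 0]⟩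
  have h1 : (1 : Q) ∈ reSet R Q f m := ⟨⊤, htop, fun j _ => ⟨j, one_mul _⟩⟩
  rw [← hI] at h1
  have h1' : (1:Q) ∈ AddSubgroup.closure
      {x : Q | ∃ a ∈ (I : Set R), ∃ q ∈ reSet R Q f m, x = f a * q} := h1
  have key : ∃ J ∈ gFilt R m, ∀ j ∈ J, ∃ r ∈ I, (1:Q) * f j = f r := by
    refine AddSubgroup.closure_induction
      (p := fun x _ => ∃ J ∈ gFilt R m, ∀ j ∈ J, ∃ r ∈ I, x * f j = f r) ?_ ?_ ?_ ?_ h1'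
    · rintro x ⟨a, ha, q, ⟨Jq, hJq, hq⟩, rfl⟩
      refine ⟨Jq, hJq, fun j hj => ?_⟩
      obtain ⟨r, hr⟩ := hq j hj
      refine ⟨a * r, ?_, by rw [mul_assoc, hr, ← map_mul]⟩
      have := I.smul_mem (MulOpposite.op r) ha
      simpa [MulOpposite.smul_eq_mul_unop] using this
    · exact ⟨⊤, htop, fun j _ => ⟨0, I.zero_mem, by simp⟩⟩
    · rintro x y _ _ ⟨Jx, hJx, hx⟩ ⟨Jy, hJy, hy⟩
      refine ⟨Jx ⊓ Jy, gFilt_inf hJx hJy, fun j hj => ?_⟩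
      obtain ⟨rx, hrx, hrx'⟩ := hx j hj.1
      obtain ⟨ry, hry, hry'⟩ := hy j hj.2
      exact ⟨rx + ry, I.add_mem hrx hry, by rw [add_mul, hrx', hry', map_add]⟩
    · rintro x _ ⟨Jx, hJx, hx⟩
      refine ⟨Jx, hJx, fun j hj => ?_⟩
      obtain ⟨r, hr, hr'⟩ := hx j hj
      exact ⟨-r, I.neg_mem hr, by rw [neg_mul, hr', map_neg]⟩
  obtain ⟨J, hJ, hJle⟩ := key
  have hle : J ≤ I := by
    intro j hj
    obtain ⟨r, hr, hr'⟩ := hJle j hj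
    rw [one_mul] at hr'
    have := hfinj hr'
    rwa [this]
  exact devLE_quot_of_le hle (m-1) hJ
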